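/- Let L_1, …, L_n > 0 and h_1, …, h_n ∈ ℝ^d, and define the partially biased probabilities p̂_i = (1/2)·L_i/(Σ_{j=1}^n L_j) + 1/(2n), which satisfy 0 < p̂_i ≤ 1 and Σ_i p̂_i = 1. Then (1/n) max_{i∈[n]} L_i/p̂_i ≤ 2 L̄ where L̄ = (1/n) Σ_{j=1}^n L_j, and (1/n²) Σ_{i=1}^n ‖h_i‖²/p̂_i ≤ (2/n) Σ_{i=1}^n ‖h_i‖². Consequently, for the single element sampling with probabilities p̂_i, the expected smoothness constant 𝓛_max = (1/n) max_i L_i/p̂_i (with L_i = λmax(M_i)) satisfies 𝓛_max ≤ 2L̄ and the gradient noise σ² = (1/n²) Σ_i ‖h_i‖²/p̂_i satisfies σ² ≤ 2 h̄, where h̄ = (1/n) Σ_i ‖h_i‖². -/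

import Mathlib

/-- **Partially biased sampling bounds.** Let `L_1, …, L_n > 0` and `h_1, …, h_n ∈ ℝ^d`, and
define the partially biased probabilities `p̂_i = (1/2) L_i/(Σ_j L_j) + 1/(2n)`. Then
`0 < p̂_i ≤ 1` and `Σ_i p̂_i = 1`; moreover the expected smoothness constant
`𝓛_max = (1/n) max_i L_i/p̂_i` of the corresponding single element sampling satisfies
`𝓛_max ≤ 2 L̄` with `L̄ = (1/n) Σ_j L_j`, and the gradient noise
`σ² = (1/n²) Σ_i ‖h_i‖²/p̂_i` satisfies `σ² ≤ 2 h̄` with `h̄ = (1/n) Σ_i ‖h_i‖²`. -/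
theorem partially_biased_sampling_bounds
    {d n : ℕ} (hn : 0 < n)
    (L : Fin n → ℝ) (hL : ∀ i, 0 < L i)
    (h : Fin n → EuclideanSpace ℝ (Fin d))
    (phat : Fin n → ℝ)
    (hphat : ∀ i, phat i = (1 / 2) * (L i / ∑ j, L j) + 1 / (2 * (n : ℝ))) :
    (∀ i, 0 < phat i ∧ phat i ≤ 1)
      ∧ (∑ i, phat i = 1)
      ∧ (1 / (n : ℝ)) * (⨆ i : Fin n, L i / phat i) ≤ 2 * ((1 / (n : ℝ)) * ∑ j, L j)
      ∧ (1 / (n : ℝ) ^ 2) * ∑ i, ‖h i‖ ^ 2 / phat i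
          ≤ 2 * ((1 / (n : ℝ)) * ∑ i, ‖h i‖ ^ 2) := by
  haveI : Nonempty (Fin n) := ⟨⟨0, hn⟩⟩
  have hnR : (0 : ℝ) < n := by exact_mod_cast hn
  have hn1 : (1 : ℝ) ≤ n := by exact_mod_cast hn
  have hS : (0 : ℝ) < ∑ j, L j :=
    Finset.sum_pos (fun i _ => hL i) ⟨⟨0, hn⟩, Finset.mem_univ _⟩
  have hp_pos : ∀ i, 0 < phat i := by
    intro i
    rw [hphat i]
    have h1 : 0 < (1 / 2 : ℝ) * (L i / ∑ j, L j) := mul_pos (by norm_num) (div_pos (hL i) hS)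
    have h2 : 0 < 1 / (2 * (n : ℝ)) := by apply div_pos one_pos; linarith
    linarith
  have hp_ge : ∀ i, (1 / 2 : ℝ) * (L i / ∑ j, L j) ≤ phat i := by
    intro i
    rw [hphat i]
    have h2 : 0 < 1 / (2 * (n : ℝ)) := by apply div_pos one_pos; linarith
    linarith
  have hp_ge2 : ∀ i, 1 / (2 * (n : ℝ)) ≤ phat i := by
    intro i
    rw [hphat i]
    have h1 : 0 ≤ (1 / 2 : ℝ) * (L i / ∑ j, L j) := (mul_pos (by norm_num) (div_pos (hL i) hS)).le
    linarith
  refine ⟨fun i => ⟨hp_pos i, ?_⟩, ?_, ?_, ?_⟩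
  · rw [hphat i]
    have hLi : L i ≤ ∑ j, L j :=
      Finset.single_le_sum (fun j _ => (hL j).le) (Finset.mem_univ i)
    have h1 : L i / ∑ j, L j ≤ 1 := (div_le_one hS).mpr hLi
    have h2 : 1 / (2 * (n : ℝ)) ≤ 1 / 2 := by
      apply one_div_le_one_div_of_le (by norm_num)
      linarith
    linarith
  · have : ∑ i, phat i = (1 / 2 : ℝ) * ((∑ i, L i) / ∑ j, L j) + n * (1 / (2 * (n : ℝ))) := by
      simp only [hphat]
      rw [Finset.sum_add_distrib, Finset.sum_const, Finset.card_univ, Fintype.card_fin]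
      rw [← Finset.mul_sum, ← Finset.sum_div]
      ring
    rw [this, div_self hS.ne']
    field_simp
    ring
  · have hsup : (⨆ i : Fin n, L i / phat i) ≤ 2 * ∑ j, L j := by
      apply ciSup_le
      intro i
      rw [div_le_iff₀ (hp_pos i)]
      have h1 : L i / (∑ j, L j) ≤ 2 * phat i := by linarith [hp_ge i]
      have h2 := (div_le_iff₀ hS).mp h1
      nlinarith
    calc (1 / (n : ℝ)) * (⨆ i : Fin n, L i / phat i)
        ≤ (1 / (n : ℝ)) * (2 * ∑ j, L j) := by
          apply mul_le_mul_of_nonneg_left hsup (by positivity)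
      _ = 2 * ((1 / (n : ℝ)) * ∑ j, L j) := by ring
  · have hterm : ∀ i, ‖h i‖ ^ 2 / phat i ≤ 2 * n * ‖h i‖ ^ 2 := by
      intro i
      rw [div_le_iff₀ (hp_pos i)]
      have hkey : 2 * (n : ℝ) * ‖h i‖ ^ 2 * (1 / (2 * (n : ℝ))) = ‖h i‖ ^ 2 := by
        field_simp
      have hm : 2 * (n : ℝ) * ‖h i‖ ^ 2 * (1 / (2 * (n : ℝ)))
          ≤ 2 * (n : ℝ) * ‖h i‖ ^ 2 * phat i :=
        mul_le_mul_of_nonneg_left (hp_ge2 i) (by positivity)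
      nlinarith
    calc (1 / (n : ℝ) ^ 2) * ∑ i, ‖h i‖ ^ 2 / phat i
        ≤ (1 / (n : ℝ) ^ 2) * ∑ i, 2 * n * ‖h i‖ ^ 2 := by
          apply mul_le_mul_of_nonneg_left
          · exact Finset.sum_le_sum fun i _ => hterm i
          · positivity
      _ = 2 * ((1 / (n : ℝ)) * ∑ i, ‖h i‖ ^ 2) := by
          rw [← Finset.mul_sum]; field_simp
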